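/- For a graph G=(V,E), positive integer k, and edge weights v_{ij} = e^{J_{ij}} - 1, we have Σ_{A⊆E} Π_{W∈C(A)} (k)_{q^{|W|}} Π_{{i,j}∈A} v_{ij} = Σ_s q^{Σ_{v∈V} s(v)} e^{Σ_{{i,j}∈E} J_{ij}·δ(s(i),s(j))}, where the outer sum on the right is over all functions s: V → {1,...,k} and δ is the Kronecker delta. -/

import Mathlib

open Finset

lemma potts_key (n k : ℕ) (q : ℝ) (A : Finset (Fin n × Fin n)) (hA : ∀ e ∈ A, e.1 ≠ e.2) :
    ∑ s ∈ Finset.univ.filter (fun s : Fin n → Fin k => ∀ e ∈ A, s e.1 = s e.2),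
        q ^ (∑ v, (s v : ℕ)) =
    ∏ᶠ W : (SimpleGraph.fromEdgeSet
          (((A.image fun e => s(e.1, e.2)) : Finset (Sym2 (Fin n))) :
            Set (Sym2 (Fin n)))).ConnectedComponent,
        ∑ x ∈ Finset.range k, q ^ (Nat.card W.supp * x) := by
  classical
  set G := SimpleGraph.fromEdgeSet
      (((A.image fun e => s(e.1, e.2)) : Finset (Sym2 (Fin n))) : Set (Sym2 (Fin n))) with hG
  haveI : Fintype G.ConnectedComponent := Fintype.ofFinite _
  set φ : Fin n → G.ConnectedComponent := G.connectedComponentMk with hφ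
  -- edges of A are adjacent in G
  have fact1 : ∀ e ∈ A, G.Adj e.1 e.2 := by
    intro e he
    rw [hG, SimpleGraph.fromEdgeSet_adj]
    refine ⟨?_, hA e he⟩
    simp only [Finset.coe_image, Set.mem_image, Finset.mem_coe]
    exact ⟨e, he, rfl⟩
  have fact1' : ∀ e ∈ A, φ e.1 = φ e.2 := fun e he =>
    SimpleGraph.ConnectedComponent.sound (fact1 e he).reachable
  -- compatible s are constant on adjacent vertices
  have fact2 : ∀ s : Fin n → Fin k, (∀ e ∈ A, s e.1 = s e.2) →
      ∀ u v : Fin n, G.Adj u v → s u = s v := by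
    intro s hs u v huv
    rw [hG, SimpleGraph.fromEdgeSet_adj] at huv
    obtain ⟨hmem, -⟩ := huv
    simp only [Finset.coe_image, Set.mem_image, Finset.mem_coe] at hmem
    obtain ⟨e, he, heq⟩ := hmem
    rw [Sym2.eq_iff] at heq
    rcases heq with ⟨h1, h2⟩ | ⟨h1, h2⟩
    · rw [← h1, ← h2]; exact hs e he
    · rw [← h1, ← h2]; exact (hs e he).symm
  have fact3 : ∀ s : Fin n → Fin k, (∀ e ∈ A, s e.1 = s e.2) →
      ∀ (u v : Fin n) (p : G.Walk u v), p.IsPath → s u = s v := by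
    intro s hs u v p hp
    clear hp hG
    induction p with
    | nil => rfl
    | cons h p ih => exact (fact2 s hs _ _ h).trans ih
  -- cardinality of supports
  have hcard : ∀ W : G.ConnectedComponent,
      Nat.card W.supp = (Finset.univ.filter fun v => φ v = W).card := by
    intro W
    rw [Nat.card_coe_set_eq, Set.ncard_eq_toFinset_card']
    congr 1
    ext v
    simp [SimpleGraph.ConnectedComponent.mem_supp_iff, hφ]
  calc ∑ s ∈ Finset.univ.filter (fun s : Fin n → Fin k => ∀ e ∈ A, s e.1 = s e.2),
          q ^ (∑ v, (s v : ℕ))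
      = ∑ c : G.ConnectedComponent → Fin k, ∏ W : G.ConnectedComponent,
          q ^ (Nat.card W.supp * (c W : ℕ)) := by
        refine (Finset.sum_bij (fun (c : G.ConnectedComponent → Fin k) _ => fun v => c (φ v))
          ?_ ?_ ?_ ?_).symm
        · intro c _
          simp only [Finset.mem_filter, Finset.mem_univ, true_and]
          intro e he
          rw [fact1' e he]
        · intro c₁ _ c₂ _ h
          funext W
          obtain ⟨v, rfl⟩ := Quot.exists_rep W
          exact congrFun h v
        · intro s hs
          simp only [Finset.mem_filter, Finset.mem_univ, true_and] at hs
          refine ⟨SimpleGraph.ConnectedComponent.lift s (fact3 s hs), Finset.mem_univ _, ?_⟩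
          funext v
          exact SimpleGraph.ConnectedComponent.lift_mk
        · intro c _
          rw [Finset.prod_pow_eq_pow_sum]
          congr 1
          rw [← Finset.sum_fiberwise Finset.univ φ (fun v => ((c (φ v) : ℕ)))]
          refine Finset.sum_congr rfl fun W _ => ?_
          have hconst : ∀ v ∈ Finset.univ.filter (fun v => φ v = W),
              ((c (φ v) : ℕ)) = (c W : ℕ) := by
            intro v hv
            rw [(Finset.mem_filter.mp hv).2]
          rw [hcard W, Finset.sum_congr rfl hconst, Finset.sum_const, smul_eq_mul]
    _ = ∏ W : G.ConnectedComponent, ∑ x : Fin k, q ^ (Nat.card W.supp * (x : ℕ)) := by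
        rw [Finset.prod_univ_sum]
        rw [Fintype.piFinset_univ]
    _ = ∏ᶠ W : G.ConnectedComponent, ∑ x ∈ Finset.range k, q ^ (Nat.card W.supp * x) := by
        rw [finprod_eq_prod_of_fintype]
        refine Finset.prod_congr rfl fun W _ => ?_
        exact Fin.sum_univ_eq_sum_range (fun x => q ^ (Nat.card W.supp * x)) k


/-- q-Potts: Σ_{A⊆E} Π_{W∈C(A)} (k)_{q^{|W|}} Π_{{i,j}∈A} (e^{J_{ij}}-1)
    = Σ_s q^{Σ_v s(v)} e^{Σ_{{i,j}∈E} J_{ij} δ(s(i),s(j))}. -/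
theorem stmt2 (n k : ℕ) (hk : 1 ≤ k) (E : Finset (Fin n × Fin n))
    (hE : ∀ e ∈ E, e.1 < e.2) (J : Fin n × Fin n → ℝ) (q : ℝ) :
    ∑ A ∈ E.powerset,
      (∏ᶠ W : (SimpleGraph.fromEdgeSet
          (((A.image fun e => s(e.1, e.2)) : Finset (Sym2 (Fin n))) :
            Set (Sym2 (Fin n)))).ConnectedComponent,
        ∑ x ∈ Finset.range k, q ^ (Nat.card W.supp * x)) *
      ∏ e ∈ A, (Real.exp (J e) - 1) =
    ∑ s : Fin n → Fin k,
      q ^ (∑ v, (s v : ℕ)) *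
      Real.exp (∑ e ∈ E, J e * (if s e.1 = s e.2 then 1 else 0)) := by
  classical
  have hexp : ∀ s : Fin n → Fin k,
      Real.exp (∑ e ∈ E, J e * (if s e.1 = s e.2 then 1 else 0)) =
      ∑ A ∈ E.powerset, (∏ e ∈ A, (Real.exp (J e) - 1)) *
        (if ∀ e ∈ A, s e.1 = s e.2 then (1:ℝ) else 0) := by
    intro s
    rw [Real.exp_sum]
    have h1 : ∀ e ∈ E, Real.exp (J e * (if s e.1 = s e.2 then 1 else 0)) =
        (Real.exp (J e) - 1) * (if s e.1 = s e.2 then 1 else 0) + 1 := by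
      intro e _
      by_cases h : s e.1 = s e.2 <;> simp [h]
    rw [Finset.prod_congr rfl h1, Finset.prod_add]
    refine Finset.sum_congr rfl fun A hA => ?_
    rw [Finset.prod_const_one, mul_one, Finset.prod_mul_distrib, Finset.prod_boole]
    congr 1
    simp
  calc ∑ A ∈ E.powerset,
      (∏ᶠ W : (SimpleGraph.fromEdgeSet
          (((A.image fun e => s(e.1, e.2)) : Finset (Sym2 (Fin n))) :
            Set (Sym2 (Fin n)))).ConnectedComponent,
        ∑ x ∈ Finset.range k, q ^ (Nat.card W.supp * x)) *
      ∏ e ∈ A, (Real.exp (J e) - 1)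
      = ∑ A ∈ E.powerset, (∏ e ∈ A, (Real.exp (J e) - 1)) *
          ∑ s ∈ Finset.univ.filter (fun s : Fin n → Fin k => ∀ e ∈ A, s e.1 = s e.2),
            q ^ (∑ v, (s v : ℕ)) := by
        refine Finset.sum_congr rfl fun A hA => ?_
        rw [← potts_key n k q A (fun e he => (hE e (Finset.mem_powerset.mp hA he)).ne)]
        ring
    _ = ∑ s : Fin n → Fin k, ∑ A ∈ E.powerset, q ^ (∑ v, (s v : ℕ)) *
          ((∏ e ∈ A, (Real.exp (J e) - 1)) *
            (if ∀ e ∈ A, s e.1 = s e.2 then (1:ℝ) else 0)) := by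
        rw [Finset.sum_comm]
        refine Finset.sum_congr rfl fun A _ => ?_
        rw [Finset.mul_sum, Finset.sum_filter]
        refine Finset.sum_congr rfl fun s _ => ?_
        by_cases h : ∀ e ∈ A, s e.1 = s e.2
        · rw [if_pos h, if_pos h]; ring
        · rw [if_neg h, if_neg h]; ring
    _ = ∑ s : Fin n → Fin k,
          q ^ (∑ v, (s v : ℕ)) *
          Real.exp (∑ e ∈ E, J e * (if s e.1 = s e.2 then 1 else 0)) := by
        refine Finset.sum_congr rfl fun s _ => ?_
        rw [hexp s, Finset.mul_sum]
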